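/- Let I be a monomial ideal with linear quotients in a skew polynomial ring, with decomposition function g. For monomials u, v ∈ M(I), one has g(u * v) = g(u) if and only if set(g(u)) ∩ supp(v) = ∅. -/
import Mathlib


open Finset

/-- `IsDecomp u a j` : the `j`-th generator is the value of the decomposition function at the
monomial `x^a`, i.e. `u j` `*`-divides `a` and `j` is minimal with this property
(so `g(x^a) = x^(u j)`). -/
def IsDecomp {n m : ℕ} (u : Fin m → (Fin n → ℕ)) (a : Fin n → ℕ) (j : Fin m) : Prop :=
  (∃ c, a = u j + c) ∧ ∀ i : Fin m, i < j → ¬ ∃ c, a = u i + c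

/-- A monomial ideal with linear quotients: minimal monomial generators `x^(u 0), …, x^(u (m-1))`
(recorded by their exponent vectors) such that each colon ideal
`((u_0,…,u_{j-1}) : u_j)` is generated by the variables `x_s`, `s ∈ setu j`.
The membership of a monomial `x^w` in the colon ideal is recorded combinatorially. -/
structure LinearQuotients (n m : ℕ) where
  u : Fin m → (Fin n → ℕ)
  setu : Fin m → Finset (Fin n)
  colon : ∀ (j : Fin m) (w : Fin n → ℕ),
    (∃ i : Fin m, i < j ∧ ∃ c, w + u j = u i + c) ↔ ∃ s ∈ setu j, 1 ≤ w s

/-- for monomials `x^a, x^b ∈ M(I)`, one has `g(x^a * x^b) = g(x^a)` if and only if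
`set(g(x^a)) ∩ supp(x^b) = ∅`. -/
theorem decomp_mul_eq_iff {n m : ℕ} (L : LinearQuotients n m)
    (a b : Fin n → ℕ)
    (ha : ∃ (i : Fin m) (c : Fin n → ℕ), a = L.u i + c)
    (hb : ∃ (i : Fin m) (c : Fin n → ℕ), b = L.u i + c)
    (j : Fin m) (hj : IsDecomp L.u a j) :
    (∃ j' : Fin m, IsDecomp L.u (a + b) j' ∧ L.u j' = L.u j) ↔ ∀ s ∈ L.setu j, b s = 0 := by
  obtain ⟨⟨c₀, hc₀⟩, hmin⟩ := hj
  constructor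
  · rintro ⟨j', ⟨⟨c', hc'⟩, hmin'⟩, huj⟩ s hs
    have hjj : j' = j := by
      rcases lt_trichotomy j' j with h | h | h
      · exact absurd ⟨c₀, by rw [huj]; exact hc₀⟩ (hmin j' h)
      · exact h
      · exact absurd ⟨c₀ + b, by rw [hc₀]; funext t; simp; ring⟩ (hmin' j h)
    subst hjj
    by_contra hbs
    obtain ⟨i, hij, c, hic⟩ := (L.colon j' b).2 ⟨s, hs, Nat.one_le_iff_ne_zero.2 hbs⟩
    refine hmin' i hij ⟨c + c₀, ?_⟩
    funext t
    have h1 := congrFun hic t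
    have h2 := congrFun hc₀ t
    simp only [Pi.add_apply] at *
    omega
  · intro hb0
    refine ⟨j, ⟨⟨c₀ + b, by rw [hc₀]; funext t; simp; ring⟩, ?_⟩, rfl⟩
    rintro i hij ⟨c, hc⟩
    obtain ⟨s, hs, hws⟩ := (L.colon j (c₀ + b)).1 ⟨i, hij, c, by
      funext t
      have h1 := congrFun hc t
      have h2 := congrFun hc₀ t
      simp only [Pi.add_apply] at *
      omega⟩
    have hbs := hb0 s hs
    have hc₀s : 1 ≤ c₀ s := by simp only [Pi.add_apply, hbs] at hws; omega
    obtain ⟨i', hi', c', hci'⟩ := (L.colon j c₀).2 ⟨s, hs, hc₀s⟩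
    refine hmin i' hi' ⟨c', ?_⟩
    funext t
    have h1 := congrFun hci' t
    have h2 := congrFun hc₀ t
    simp only [Pi.add_apply] at *
    omega
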